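/- Define Φ : ℂ^{n₁+1} × ℂ^{n₃+1} × 𝔻 × 𝔻 → ℂ² × ℂ² by Φ(A,B,z₁,z₂) = (F(z₁,A,B), F(z₂,A,B)), and let Δ = {(v,v) : v ∈ ℂ²} ⊆ ℂ² × ℂ² be the diagonal, viewed as a real subspace of ℝ⁴ × ℝ⁴. Then there exists η > 0 such that for every (A,B) and every pair z₁ ≠ z₂ with |z₁| < η and |z₂| < η, the range of the real Fréchet derivative of Φ at (A,B,z₁,z₂) together with Δ spans all of ℝ⁴ × ℝ⁴; i.e. Φ is transverse to the diagonal at such points. -/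

import Mathlib

open Complex ComplexConjugate Metric

/-- The monic-plus-perturbation polynomial `P_A(z) = z^n + Σ_{i=0}^n aᵢ zⁱ`. -/
noncomputable def Ppoly (n : ℕ) (A : Fin (n + 1) → ℂ) (z : ℂ) : ℂ :=
  z ^ n + ∑ i : Fin (n + 1), A i * z ^ (i : ℕ)

/-- Let `Φ(A,B,z₁,z₂) = (F(z₁,A,B), F(z₂,A,B))`. Then there is `η > 0`
such that for all `(A,B)` and all `z₁ ≠ z₂` with `|z₁|, |z₂| < η`, the range of the real
Fréchet derivative of `Φ` at `(A,B,z₁,z₂)` together with the diagonal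
`Δ = {(v,v)}` spans all of `ℝ⁴ × ℝ⁴ ≅ ℂ² × ℂ²`. -/
lemma Ppoly_zero (n : ℕ) (z : ℂ) : Ppoly n 0 z = z ^ n := by simp [Ppoly]

lemma Ppoly_single (n : ℕ) (k : Fin (n + 1)) (z : ℂ) :
    Ppoly n (Pi.single k 1) z = z ^ n + z ^ (k : ℕ) := by
  unfold Ppoly
  congr 1
  rw [Finset.sum_eq_single k]
  · simp
  · intro b _ hb; simp [Pi.single_eq_of_ne hb]
  · simp

lemma mySolve (α β γ c x y : ℂ) (h : ‖β‖ * ‖γ‖ < ‖α‖ * ‖c‖) :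
    ∃ δ ε : ℂ, δ * α + conj ε * conj γ = x ∧ ε * c + conj δ * conj β = y := by
  set D : ℂ := α * conj c - β * conj γ with hDdef
  have hD : D ≠ 0 := by
    intro h0
    have h1 : α * conj c = β * conj γ := sub_eq_zero.mp h0
    have h2 : ‖α * conj c‖ = ‖β * conj γ‖ := by rw [h1]
    rw [norm_mul, norm_mul, RCLike.norm_conj, RCLike.norm_conj] at h2
    linarith
  refine ⟨(conj c * x - conj γ * conj y) / D, conj ((α * conj y - β * x) / D), ?_, ?_⟩
  · rw [conj_conj]
    field_simp
    ring
  · simp only [map_div₀, map_sub, map_mul, conj_conj]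
    have hD' : conj α * c - conj β * γ ≠ 0 := by
      intro hh
      apply hD
      have h2 := congrArg (starRingEnd ℂ) hh
      simpa [map_sub, map_mul, hDdef] using h2
    rw [hDdef]
    simp only [map_sub, map_mul, conj_conj]
    field_simp
    ring

lemma myMVT {r : ℝ} {f d : ℂ → ℂ} (hf : ∀ z ∈ ball (0:ℂ) r, HasDerivAt f (d z) z)
    {C : ℝ} (hC : ∀ z ∈ ball (0:ℂ) r, ‖d z‖ ≤ C) {z₁ z₂ : ℂ}
    (h1 : z₁ ∈ ball (0:ℂ) r) (h2 : z₂ ∈ ball (0:ℂ) r) :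
    ‖f z₁ - f z₂‖ ≤ C * ‖z₁ - z₂‖ := by
  have := (convex_ball (0:ℂ) r).norm_image_sub_le_of_norm_hasFDerivWithin_le
    (f' := fun z => ((1 : ℂ →L[ℂ] ℂ).smulRight (d z)).restrictScalars ℝ)
    (fun z hz => ((hf z hz).hasFDerivAt.restrictScalars ℝ).hasFDerivWithinAt)
    (fun z hz => by
      rw [ContinuousLinearMap.norm_restrictScalars]
      simpa using hC z hz) h2 h1
  simpa using this

lemma myMVTlow {r : ℝ} {f d : ℂ → ℂ} (hf : ∀ z ∈ ball (0:ℂ) r, HasDerivAt f (d z) z)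
    {c : ℂ} {C : ℝ} (hC : ∀ z ∈ ball (0:ℂ) r, ‖d z - c‖ ≤ C) {z₁ z₂ : ℂ}
    (h1 : z₁ ∈ ball (0:ℂ) r) (h2 : z₂ ∈ ball (0:ℂ) r) :
    (‖c‖ - C) * ‖z₁ - z₂‖ ≤ ‖f z₁ - f z₂‖ := by
  have h := myMVT (f := fun z => f z - c * z) (d := fun z => d z - c)
    (fun z hz => ((hf z hz).sub ((hasDerivAt_id z).const_mul c)).congr_deriv (by ring))
    hC h1 h2
  have h2' : ‖c * z₁ - c * z₂‖ - ‖f z₁ - f z₂‖ ≤ C * ‖z₁ - z₂‖ := by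
    calc ‖c * z₁ - c * z₂‖ - ‖f z₁ - f z₂‖ ≤ ‖(f z₁ - c * z₁) - (f z₂ - c * z₂)‖ := by
          have := norm_sub_norm_le (c * z₁ - c * z₂) (f z₁ - f z₂)
          have : ‖c * z₁ - c * z₂ - (f z₁ - f z₂)‖ = ‖(f z₁ - c * z₁) - (f z₂ - c * z₂)‖ := by
            rw [← norm_neg]; ring_nf
          nlinarith [norm_sub_norm_le (c * z₁ - c * z₂) (f z₁ - f z₂)]
      _ ≤ C * ‖z₁ - z₂‖ := h
  have hcz : ‖c * z₁ - c * z₂‖ = ‖c‖ * ‖z₁ - z₂‖ := by rw [← mul_sub, norm_mul]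
  nlinarith

lemma myUnique {f g d : ℂ → ℂ} (hf : ∀ z ∈ ball (0:ℂ) 1, HasDerivAt f (d z) z)
    (hg : ∀ z ∈ ball (0:ℂ) 1, HasDerivAt g (d z) z) (h0 : f 0 = g 0) :
    Set.EqOn f g (ball (0:ℂ) 1) := by
  intro z hz
  have h : ‖(f z - g z) - (f 0 - g 0)‖ ≤ 0 * ‖z - 0‖ := myMVT (r := 1)
    (f := fun z => f z - g z) (d := fun _ => 0)
    (fun w hw => by simpa using (hf w hw).fun_sub (hg w hw)) (C := 0) (fun _ _ => by simp)
    hz (mem_ball_self one_pos)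
  rw [h0, sub_self, sub_zero, zero_mul] at h
  have h2 := le_antisymm h (norm_nonneg _)
  rw [norm_eq_zero, sub_eq_zero] at h2
  exact h2

lemma sum_single_shift {n : ℕ} (A U : Fin (n + 1) → ℂ) (c : ℂ) :
    ∑ i, (A i + (Pi.single (0 : Fin (n + 1)) c : Fin (n + 1) → ℂ) i) * U i = (∑ i, A i * U i) + c * U 0 := by
  simp only [add_mul, Finset.sum_add_distrib]
  congr 1
  rw [Finset.sum_eq_single 0]
  · simp
  · intro b _ hb; simp [Pi.single_eq_of_ne hb]
  · simp

lemma hat_eq {n : ℕ} (t w : ℂ → ℂ) (g : (Fin (n + 1) → ℂ) → ℂ → ℂ)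
    (hg0 : ∀ C, g C 0 = 0)
    (hg : ∀ C, ∀ z ∈ ball (0:ℂ) 1, HasDerivAt (g C) (w z * (Ppoly n C z * t z)) z)
    (C : Fin (n + 1) → ℂ) :
    (∀ z ∈ ball (0:ℂ) 1, HasDerivAt
      (fun z => g 0 z + ∑ i, C i * (g (Pi.single i 1) z - g 0 z))
      (w z * (Ppoly n C z * t z)) z) ∧
    Set.EqOn (g C)
      (fun z => g 0 z + ∑ i, C i * (g (Pi.single i 1) z - g 0 z)) (ball (0:ℂ) 1) := by
  have hder : ∀ z ∈ ball (0:ℂ) 1, HasDerivAt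
      (fun z => g 0 z + ∑ i, C i * (g (Pi.single i 1) z - g 0 z))
      (w z * (Ppoly n C z * t z)) z := by
    intro z hz
    have h := (hg 0 z hz).fun_add (HasDerivAt.fun_sum (u := Finset.univ)
      (fun i _ => (((hg (Pi.single i 1) z hz).fun_sub (hg 0 z hz)).const_mul (C i))))
    refine h.congr_deriv ?_
    have hterm : ∀ i : Fin (n + 1),
        C i * (w z * (Ppoly n (Pi.single i 1) z * t z) - w z * (Ppoly n 0 z * t z))
          = w z * t z * (C i * z ^ (i : ℕ)) := by
      intro i; rw [Ppoly_single, Ppoly_zero]; ring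
    rw [Finset.sum_congr rfl (fun i _ => hterm i), ← Finset.mul_sum, Ppoly_zero, Ppoly]
    ring
  refine ⟨hder, myUnique (hg C) hder ?_⟩
  simp [hg0]

lemma hat_shift {n : ℕ} (G : ℂ → ℂ) (U : Fin (n + 1) → ℂ → ℂ)
    (A : Fin (n + 1) → ℂ) (c : ℂ) (t : ℝ) (z : ℂ) :
    G z + ∑ i, (A + t • (Pi.single (0 : Fin (n + 1)) c : Fin (n + 1) → ℂ)) i * U i z
      = (G z + ∑ i, A i * U i z) + ((t : ℂ) * c) * U 0 z := by
  have h : (A + t • (Pi.single (0 : Fin (n + 1)) c : Fin (n + 1) → ℂ))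
      = fun i => A i + (Pi.single (0 : Fin (n + 1)) ((t : ℂ) * c) : Fin (n + 1) → ℂ) i := by
    funext i
    simp only [Pi.add_apply, Pi.smul_apply, Pi.single_apply]
    split <;> simp [Complex.real_smul]
  rw [h, sum_single_shift (U := fun i => U i z)]
  ring


theorem transversality_to_diagonal
    (n₁ n₂ n₃ n₄ : ℕ)
    (h12 : n₁ < n₂) (h13 : n₁ < n₃) (h14 : n₁ < n₄) (h32 : n₃ < n₂)
    (hsum : n₁ + n₂ = n₃ + n₄)
    (t₁ t₂ t₃ t₄ f₁ f₂ f₃ f₄ : ℂ → ℂ)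
    (ht₁ : DifferentiableOn ℂ t₁ (ball (0:ℂ) 1))
    (ht₂ : DifferentiableOn ℂ t₂ (ball (0:ℂ) 1))
    (ht₃ : DifferentiableOn ℂ t₃ (ball (0:ℂ) 1))
    (ht₄ : DifferentiableOn ℂ t₄ (ball (0:ℂ) 1))
    (ht₁0 : t₁ 0 ≠ 0) (ht₂0 : t₂ 0 ≠ 0) (ht₃0 : t₃ 0 ≠ 0) (ht₄0 : t₄ 0 ≠ 0)
    (hf₁ : ∀ z ∈ ball (0:ℂ) 1, HasDerivAt f₁ (z ^ n₁ * t₁ z) z)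
    (hf₂ : ∀ z ∈ ball (0:ℂ) 1, HasDerivAt f₂ (z ^ n₂ * t₂ z) z)
    (hf₃ : ∀ z ∈ ball (0:ℂ) 1, HasDerivAt f₃ (z ^ n₃ * t₃ z) z)
    (hf₄ : ∀ z ∈ ball (0:ℂ) 1, HasDerivAt f₄ (z ^ n₄ * t₄ z) z)
    (hconf : ∀ z ∈ ball (0:ℂ) 1,
      (z ^ n₁ * t₁ z) * (z ^ n₂ * t₂ z) + (z ^ n₃ * t₃ z) * (z ^ n₄ * t₄ z) = 0)
    (g₁ g₂ g₃ g₄ : (Fin (n₁ + 1) → ℂ) → (Fin (n₃ + 1) → ℂ) → ℂ → ℂ)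
    (hg₁0 : ∀ A B, g₁ A B 0 = 0) (hg₂0 : ∀ A B, g₂ A B 0 = 0)
    (hg₃0 : ∀ A B, g₃ A B 0 = 0) (hg₄0 : ∀ A B, g₄ A B 0 = 0)
    (hg₁ : ∀ A B, ∀ z ∈ ball (0:ℂ) 1,
      HasDerivAt (g₁ A B) (Ppoly n₁ A z * t₁ z) z)
    (hg₂ : ∀ A B, ∀ z ∈ ball (0:ℂ) 1,
      HasDerivAt (g₂ A B) (z ^ (n₂ - n₃) * (Ppoly n₃ B z * t₂ z)) z)
    (hg₃ : ∀ A B, ∀ z ∈ ball (0:ℂ) 1,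
      HasDerivAt (g₃ A B) (Ppoly n₃ B z * t₃ z) z)
    (hg₄ : ∀ A B, ∀ z ∈ ball (0:ℂ) 1,
      HasDerivAt (g₄ A B) (z ^ (n₄ - n₁) * (Ppoly n₁ A z * t₄ z)) z)
    (FF : (Fin (n₁ + 1) → ℂ) → (Fin (n₃ + 1) → ℂ) → ℂ → ℂ × ℂ)
    (hFF : ∀ A B z, FF A B z =
      (g₁ A B z + conj (g₂ A B z), g₃ A B z + conj (g₄ A B z)))
    (Φ : ((Fin (n₁ + 1) → ℂ) × (Fin (n₃ + 1) → ℂ)) × ℂ × ℂ → (ℂ × ℂ) × (ℂ × ℂ))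
    (hΦ : ∀ A B z₁ z₂, Φ ((A, B), z₁, z₂) = (FF A B z₁, FF A B z₂)) :
    ∃ η > (0:ℝ), ∀ (A : Fin (n₁ + 1) → ℂ) (B : Fin (n₃ + 1) → ℂ) (z₁ z₂ : ℂ),
      z₁ ≠ z₂ → ‖z₁‖ < η → ‖z₂‖ < η →
      Submodule.span ℝ
        (Set.range (fderiv ℝ Φ ((A, B), z₁, z₂)) ∪
          {p : (ℂ × ℂ) × (ℂ × ℂ) | p.1 = p.2}) = ⊤ := by
  classical
  have hc₁ : ContinuousAt t₁ 0 := ht₁.continuousOn.continuousAt (ball_mem_nhds (0:ℂ) one_pos)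
  have hc₃ : ContinuousAt t₃ 0 := ht₃.continuousOn.continuousAt (ball_mem_nhds (0:ℂ) one_pos)
  have ht₁pos : 0 < ‖t₁ 0‖ := norm_pos_iff.mpr ht₁0
  have ht₃pos : 0 < ‖t₃ 0‖ := norm_pos_iff.mpr ht₃0
  obtain ⟨η₁, hη₁pos, hη₁⟩ := Metric.continuousAt_iff.mp hc₁ (‖t₁ 0‖ / 2) (half_pos ht₁pos)
  obtain ⟨η₃, hη₃pos, hη₃⟩ := Metric.continuousAt_iff.mp hc₃ (‖t₃ 0‖ / 2) (half_pos ht₃pos)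
  obtain ⟨M₂', hM₂'⟩ := (isCompact_closedBall (0:ℂ) (1/2)).exists_bound_of_continuousOn
    (ht₂.continuousOn.mono (closedBall_subset_ball (by norm_num)))
  obtain ⟨M₄', hM₄'⟩ := (isCompact_closedBall (0:ℂ) (1/2)).exists_bound_of_continuousOn
    (ht₄.continuousOn.mono (closedBall_subset_ball (by norm_num)))
  set M : ℝ := max 1 (max M₂' M₄') with hMdef
  have hM1 : (1:ℝ) ≤ M := le_max_left _ _
  have hMpos : (0:ℝ) < M := lt_of_lt_of_le one_pos hM1
  have hbound₂ : ∀ z : ℂ, ‖z‖ ≤ 1/2 → ‖t₂ z‖ ≤ M := fun z hz =>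
    le_trans (hM₂' z (by simpa [Metric.mem_closedBall, dist_zero_right] using hz))
      (le_trans (le_max_left _ _) (le_max_right _ _))
  have hbound₄ : ∀ z : ℂ, ‖z‖ ≤ 1/2 → ‖t₄ z‖ ≤ M := fun z hz =>
    le_trans (hM₄' z (by simpa [Metric.mem_closedBall, dist_zero_right] using hz))
      (le_trans (le_max_right _ _) (le_max_right _ _))
  set K : ℝ := ‖t₁ 0‖ * ‖t₃ 0‖ with hKdef
  have hKpos : 0 < K := mul_pos ht₁pos ht₃pos
  set η : ℝ := min (min η₁ η₃) (min (1/2) (K / (2 * M * (K + 1)))) with hηdef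
  have hηpos : 0 < η := lt_min (lt_min hη₁pos hη₃pos) (lt_min (by norm_num) (by positivity))
  refine ⟨η, hηpos, ?_⟩
  intro A B z₁ z₂ hne hz₁ hz₂
  have hη12 : η ≤ 1/2 := le_trans (min_le_right _ _) (min_le_left _ _)
  have hηη₁ : η ≤ η₁ := le_trans (min_le_left _ _) (min_le_left _ _)
  have hηη₃ : η ≤ η₃ := le_trans (min_le_left _ _) (min_le_right _ _)
  have hηK : η ≤ K / (2 * M * (K + 1)) := le_trans (min_le_right _ _) (min_le_right _ _)
  have hball : ball (0:ℂ) η ⊆ ball (0:ℂ) 1 := ball_subset_ball (by linarith)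
  have hz₁η : z₁ ∈ ball (0:ℂ) η := mem_ball_zero_iff.mpr hz₁
  have hz₂η : z₂ ∈ ball (0:ℂ) η := mem_ball_zero_iff.mpr hz₂
  have hz₁b : z₁ ∈ ball (0:ℂ) 1 := hball hz₁η
  have hz₂b : z₂ ∈ ball (0:ℂ) 1 := hball hz₂η
  have hzmem : ∀ z ∈ ball (0:ℂ) η, ‖z‖ < η := fun z hz => mem_ball_zero_iff.mp hz
  -- the four basic variation functions
  set u : ℂ → ℂ := fun z => g₁ (Pi.single 0 1) 0 z - g₁ 0 0 z with hudef
  set vA : ℂ → ℂ := fun z => g₄ (Pi.single 0 1) 0 z - g₄ 0 0 z with hvdef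
  set pB : ℂ → ℂ := fun z => g₂ 0 (Pi.single 0 1) z - g₂ 0 0 z with hpdef
  set q : ℂ → ℂ := fun z => g₃ 0 (Pi.single 0 1) z - g₃ 0 0 z with hqdef
  have hu : ∀ z ∈ ball (0:ℂ) 1, HasDerivAt u (t₁ z) z := by
    intro z hz
    refine ((hg₁ (Pi.single 0 1) 0 z hz).sub (hg₁ 0 0 z hz)).congr_deriv ?_
    rw [Ppoly_single, Ppoly_zero]
    simp only [Fin.val_zero, pow_zero]
    ring
  have hvA : ∀ z ∈ ball (0:ℂ) 1, HasDerivAt vA (z ^ (n₄ - n₁) * t₄ z) z := by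
    intro z hz
    refine ((hg₄ (Pi.single 0 1) 0 z hz).sub (hg₄ 0 0 z hz)).congr_deriv ?_
    rw [Ppoly_single, Ppoly_zero]
    simp only [Fin.val_zero, pow_zero]
    ring
  have hpB : ∀ z ∈ ball (0:ℂ) 1, HasDerivAt pB (z ^ (n₂ - n₃) * t₂ z) z := by
    intro z hz
    refine ((hg₂ 0 (Pi.single 0 1) z hz).sub (hg₂ 0 0 z hz)).congr_deriv ?_
    rw [Ppoly_single, Ppoly_zero]
    simp only [Fin.val_zero, pow_zero]
    ring
  have hq : ∀ z ∈ ball (0:ℂ) 1, HasDerivAt q (t₃ z) z := by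
    intro z hz
    refine ((hg₃ 0 (Pi.single 0 1) z hz).sub (hg₃ 0 0 z hz)).congr_deriv ?_
    rw [Ppoly_single, Ppoly_zero]
    simp only [Fin.val_zero, pow_zero]
    ring
  -- lower bounds
  have hαlow : (‖t₁ 0‖ / 2) * ‖z₁ - z₂‖ ≤ ‖u z₁ - u z₂‖ := by
    have h := myMVTlow (fun z hz => hu z (hball hz))
      (c := t₁ 0) (C := ‖t₁ 0‖ / 2)
      (fun z hz => by
        have hd : dist z 0 < η₁ := by
          rw [dist_zero_right]; exact lt_of_lt_of_le (hzmem z hz) hηη₁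
        have := hη₁ hd
        rw [dist_eq_norm] at this
        exact le_of_lt this) hz₁η hz₂η
    have he : ‖t₁ 0‖ - ‖t₁ 0‖ / 2 = ‖t₁ 0‖ / 2 := by ring
    rwa [he] at h
  have hclow : (‖t₃ 0‖ / 2) * ‖z₁ - z₂‖ ≤ ‖q z₁ - q z₂‖ := by
    have h := myMVTlow (fun z hz => hq z (hball hz))
      (c := t₃ 0) (C := ‖t₃ 0‖ / 2)
      (fun z hz => by
        have hd : dist z 0 < η₃ := by
          rw [dist_zero_right]; exact lt_of_lt_of_le (hzmem z hz) hηη₃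
        have := hη₃ hd
        rw [dist_eq_norm] at this
        exact le_of_lt this) hz₁η hz₂η
    have he : ‖t₃ 0‖ - ‖t₃ 0‖ / 2 = ‖t₃ 0‖ / 2 := by ring
    rwa [he] at h
  -- upper bounds
  have hβup : ‖vA z₁ - vA z₂‖ ≤ (η * M) * ‖z₁ - z₂‖ := by
    refine myMVT (fun z hz => hvA z (hball hz)) (fun z hz => ?_) hz₁η hz₂η
    have hzη := hzmem z hz
    have hz1 : ‖z‖ ≤ 1/2 := le_of_lt (lt_of_lt_of_le hzη hη12)
    have h1 : ‖z ^ (n₄ - n₁)‖ ≤ η := by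
      rw [norm_pow]
      calc ‖z‖ ^ (n₄ - n₁) ≤ ‖z‖ ^ 1 :=
            pow_le_pow_of_le_one (norm_nonneg z) (by linarith) (by omega)
        _ = ‖z‖ := pow_one _
        _ ≤ η := le_of_lt hzη
    rw [norm_mul]
    exact mul_le_mul h1 (hbound₄ z hz1) (norm_nonneg _) (le_of_lt hηpos)
  have hγup : ‖pB z₁ - pB z₂‖ ≤ (η * M) * ‖z₁ - z₂‖ := by
    refine myMVT (fun z hz => hpB z (hball hz)) (fun z hz => ?_) hz₁η hz₂η
    have hzη := hzmem z hz
    have hz1 : ‖z‖ ≤ 1/2 := le_of_lt (lt_of_lt_of_le hzη hη12)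
    have h1 : ‖z ^ (n₂ - n₃)‖ ≤ η := by
      rw [norm_pow]
      calc ‖z‖ ^ (n₂ - n₃) ≤ ‖z‖ ^ 1 :=
            pow_le_pow_of_le_one (norm_nonneg z) (by linarith) (by omega)
        _ = ‖z‖ := pow_one _
        _ ≤ η := le_of_lt hzη
    rw [norm_mul]
    exact mul_le_mul h1 (hbound₂ z hz1) (norm_nonneg _) (le_of_lt hηpos)
  have hΔ : 0 < ‖z₁ - z₂‖ := norm_pos_iff.mpr (sub_ne_zero.mpr hne)
  have hη2 : (η * M) * (η * M) < (‖t₁ 0‖ / 2) * (‖t₃ 0‖ / 2) := by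
    have h1 : η * (2 * M * (K + 1)) ≤ K := (le_div_iff₀ (by positivity)).mp hηK
    have hRHS : (‖t₁ 0‖ / 2) * (‖t₃ 0‖ / 2) = K / 4 := by rw [hKdef]; ring
    rw [hRHS]
    nlinarith [mul_pos hηpos hMpos, hKpos, sq_nonneg (η * M), mul_le_mul_of_nonneg_left h1 (le_of_lt (mul_pos hηpos hMpos))]
  have hdet : ‖vA z₁ - vA z₂‖ * ‖pB z₁ - pB z₂‖ < ‖u z₁ - u z₂‖ * ‖q z₁ - q z₂‖ := by
    calc ‖vA z₁ - vA z₂‖ * ‖pB z₁ - pB z₂‖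
        ≤ ((η * M) * ‖z₁ - z₂‖) * ((η * M) * ‖z₁ - z₂‖) :=
          mul_le_mul hβup hγup (norm_nonneg _) (by positivity)
      _ = ((η * M) * (η * M)) * (‖z₁ - z₂‖ * ‖z₁ - z₂‖) := by ring
      _ < ((‖t₁ 0‖ / 2) * (‖t₃ 0‖ / 2)) * (‖z₁ - z₂‖ * ‖z₁ - z₂‖) :=
          mul_lt_mul_of_pos_right hη2 (by positivity)
      _ = ((‖t₁ 0‖ / 2) * ‖z₁ - z₂‖) * ((‖t₃ 0‖ / 2) * ‖z₁ - z₂‖) := by ring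
      _ ≤ ‖u z₁ - u z₂‖ * ‖q z₁ - q z₂‖ :=
          mul_le_mul hαlow hclow (by positivity) (norm_nonneg _)
  -- hat functions
  have H₁ := hat_eq t₁ (fun _ => (1:ℂ)) (fun C => g₁ C 0) (fun C => hg₁0 C 0)
    (fun C z hz => (hg₁ C 0 z hz).congr_deriv (by ring))
  have H₂ := hat_eq t₂ (fun z => z ^ (n₂ - n₃)) (fun C => g₂ 0 C) (fun C => hg₂0 0 C)
    (fun C z hz => hg₂ 0 C z hz)
  have H₃ := hat_eq t₃ (fun _ => (1:ℂ)) (fun C => g₃ 0 C) (fun C => hg₃0 0 C)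
    (fun C z hz => (hg₃ 0 C z hz).congr_deriv (by ring))
  have H₄ := hat_eq t₄ (fun z => z ^ (n₄ - n₁)) (fun C => g₄ C 0) (fun C => hg₄0 C 0)
    (fun C z hz => hg₄ C 0 z hz)
  -- independence of the other coefficient block
  have hBind₁ : ∀ A' B', Set.EqOn (g₁ A' B') (g₁ A' 0) (ball (0:ℂ) 1) := fun A' B' =>
    myUnique (hg₁ A' B') (hg₁ A' 0) (by rw [hg₁0, hg₁0])
  have hBind₂ : ∀ A' B', Set.EqOn (g₂ A' B') (g₂ 0 B') (ball (0:ℂ) 1) := fun A' B' =>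
    myUnique (hg₂ A' B') (hg₂ 0 B') (by rw [hg₂0, hg₂0])
  have hBind₃ : ∀ A' B', Set.EqOn (g₃ A' B') (g₃ 0 B') (ball (0:ℂ) 1) := fun A' B' =>
    myUnique (hg₃ A' B') (hg₃ 0 B') (by rw [hg₃0, hg₃0])
  have hBind₄ : ∀ A' B', Set.EqOn (g₄ A' B') (g₄ A' 0) (ball (0:ℂ) 1) := fun A' B' =>
    myUnique (hg₄ A' B') (hg₄ A' 0) (by rw [hg₄0, hg₄0])
  set gh₁ : (Fin (n₁ + 1) → ℂ) → ℂ → ℂ := fun A' z =>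
    g₁ 0 0 z + ∑ i, A' i * (g₁ (Pi.single i 1) 0 z - g₁ 0 0 z) with hgh₁
  set gh₂ : (Fin (n₃ + 1) → ℂ) → ℂ → ℂ := fun B' z =>
    g₂ 0 0 z + ∑ j, B' j * (g₂ 0 (Pi.single j 1) z - g₂ 0 0 z) with hgh₂
  set gh₃ : (Fin (n₃ + 1) → ℂ) → ℂ → ℂ := fun B' z =>
    g₃ 0 0 z + ∑ j, B' j * (g₃ 0 (Pi.single j 1) z - g₃ 0 0 z) with hgh₃
  set gh₄ : (Fin (n₁ + 1) → ℂ) → ℂ → ℂ := fun A' z =>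
    g₄ 0 0 z + ∑ i, A' i * (g₄ (Pi.single i 1) 0 z - g₄ 0 0 z) with hgh₄
  have heq₁ : ∀ A' B', ∀ z ∈ ball (0:ℂ) 1, g₁ A' B' z = gh₁ A' z := by
    intro A' B' z hz
    rw [hgh₁]
    exact (hBind₁ A' B' hz).trans ((H₁ A').2 hz)
  have heq₂ : ∀ A' B', ∀ z ∈ ball (0:ℂ) 1, g₂ A' B' z = gh₂ B' z := by
    intro A' B' z hz
    rw [hgh₂]
    exact (hBind₂ A' B' hz).trans ((H₂ B').2 hz)
  have heq₃ : ∀ A' B', ∀ z ∈ ball (0:ℂ) 1, g₃ A' B' z = gh₃ B' z := by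
    intro A' B' z hz
    rw [hgh₃]
    exact (hBind₃ A' B' hz).trans ((H₃ B').2 hz)
  have heq₄ : ∀ A' B', ∀ z ∈ ball (0:ℂ) 1, g₄ A' B' z = gh₄ A' z := by
    intro A' B' z hz
    rw [hgh₄]
    exact (hBind₄ A' B' hz).trans ((H₄ A').2 hz)
  set pt : ((Fin (n₁ + 1) → ℂ) × (Fin (n₃ + 1) → ℂ)) × ℂ × ℂ := ((A, B), z₁, z₂) with hptdef
  set Φh : ((Fin (n₁ + 1) → ℂ) × (Fin (n₃ + 1) → ℂ)) × ℂ × ℂ → (ℂ × ℂ) × (ℂ × ℂ) := fun p =>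
    ((gh₁ p.1.1 p.2.1 + conj (gh₂ p.1.2 p.2.1), gh₃ p.1.2 p.2.1 + conj (gh₄ p.1.1 p.2.1)),
     (gh₁ p.1.1 p.2.2 + conj (gh₂ p.1.2 p.2.2), gh₃ p.1.2 p.2.2 + conj (gh₄ p.1.1 p.2.2)))
    with hΦhdef
  have hev : Φ =ᶠ[nhds pt] Φh := by
    have hUopen : IsOpen {p : ((Fin (n₁ + 1) → ℂ) × (Fin (n₃ + 1) → ℂ)) × ℂ × ℂ |
        p.2.1 ∈ ball (0:ℂ) 1 ∧ p.2.2 ∈ ball (0:ℂ) 1} :=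
      (isOpen_ball.preimage (continuous_fst.comp continuous_snd)).inter
        (isOpen_ball.preimage (continuous_snd.comp continuous_snd))
    refine Filter.eventuallyEq_of_mem (hUopen.mem_nhds ⟨hz₁b, hz₂b⟩) ?_
    rintro ⟨⟨A', B'⟩, w₁, w₂⟩ ⟨hw₁, hw₂⟩
    show Φ ((A', B'), w₁, w₂) = Φh ((A', B'), w₁, w₂)
    rw [hΦ, hFF, hFF, hΦhdef]
    rw [heq₁ A' B' w₁ hw₁, heq₂ A' B' w₁ hw₁, heq₃ A' B' w₁ hw₁, heq₄ A' B' w₁ hw₁,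
        heq₁ A' B' w₂ hw₂, heq₂ A' B' w₂ hw₂, heq₃ A' B' w₂ hw₂, heq₄ A' B' w₂ hw₂]
  -- differentiability of Φh at pt
  have hdiffΦh : DifferentiableAt ℝ Φh pt := by
    have hslot1 : DifferentiableAt ℝ
        (fun p : ((Fin (n₁ + 1) → ℂ) × (Fin (n₃ + 1) → ℂ)) × ℂ × ℂ => p.2.1) pt :=
      differentiableAt_snd.fst
    have hslot2 : DifferentiableAt ℝ
        (fun p : ((Fin (n₁ + 1) → ℂ) × (Fin (n₃ + 1) → ℂ)) × ℂ × ℂ => p.2.2) pt :=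
      differentiableAt_snd.snd
    have hcoordA : ∀ i : Fin (n₁ + 1), DifferentiableAt ℝ
        (fun p : ((Fin (n₁ + 1) → ℂ) × (Fin (n₃ + 1) → ℂ)) × ℂ × ℂ => p.1.1 i) pt := by
      intro i
      exact (((ContinuousLinearMap.proj (R := ℂ) (φ := fun _ : Fin (n₁ + 1) => ℂ)
        i).differentiableAt).restrictScalars ℝ).comp pt differentiableAt_fst.fst
    have hcoordB : ∀ j : Fin (n₃ + 1), DifferentiableAt ℝ
        (fun p : ((Fin (n₁ + 1) → ℂ) × (Fin (n₃ + 1) → ℂ)) × ℂ × ℂ => p.1.2 j) pt := by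
      intro j
      exact (((ContinuousLinearMap.proj (R := ℂ) (φ := fun _ : Fin (n₃ + 1) => ℂ)
        j).differentiableAt).restrictScalars ℝ).comp pt differentiableAt_fst.snd
    have hcomp1 : ∀ (hf : ℂ → ℂ) (d : ℂ), HasDerivAt hf d z₁ → DifferentiableAt ℝ
        (fun p : ((Fin (n₁ + 1) → ℂ) × (Fin (n₃ + 1) → ℂ)) × ℂ × ℂ => hf p.2.1) pt :=
      fun hf d hd => ((hd.differentiableAt).restrictScalars ℝ).comp pt hslot1
    have hcomp2 : ∀ (hf : ℂ → ℂ) (d : ℂ), HasDerivAt hf d z₂ → DifferentiableAt ℝ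
        (fun p : ((Fin (n₁ + 1) → ℂ) × (Fin (n₃ + 1) → ℂ)) × ℂ × ℂ => hf p.2.2) pt :=
      fun hf d hd => ((hd.differentiableAt).restrictScalars ℝ).comp pt hslot2
    have hconj : ∀ f : ((Fin (n₁ + 1) → ℂ) × (Fin (n₃ + 1) → ℂ)) × ℂ × ℂ → ℂ,
        DifferentiableAt ℝ f pt → DifferentiableAt ℝ (fun p => conj (f p)) pt := by
      intro f hf
      have := (Complex.conjCLE.differentiableAt).comp pt hf
      exact this
    have hgh₁d : ∀ (z₀ : ℂ), z₀ ∈ ball (0:ℂ) 1 →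
        (∀ sel : ((Fin (n₁ + 1) → ℂ) × (Fin (n₃ + 1) → ℂ)) × ℂ × ℂ → ℂ, True) := fun _ _ _ => trivial
    rw [hΦhdef]
    refine DifferentiableAt.prodMk (DifferentiableAt.prodMk ?_ ?_) (DifferentiableAt.prodMk ?_ ?_)
    · refine DifferentiableAt.fun_add ?_ (hconj _ ?_)
      · rw [hgh₁]
        refine DifferentiableAt.fun_add (hcomp1 _ _ (hg₁ 0 0 z₁ hz₁b)) ?_
        refine DifferentiableAt.fun_sum (fun i _ => ?_)
        exact (hcoordA i).fun_mul (hcomp1 _ _ ((hg₁ (Pi.single i 1) 0 z₁ hz₁b).sub (hg₁ 0 0 z₁ hz₁b)))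
      · rw [hgh₂]
        refine DifferentiableAt.fun_add (hcomp1 _ _ (hg₂ 0 0 z₁ hz₁b)) ?_
        refine DifferentiableAt.fun_sum (fun j _ => ?_)
        exact (hcoordB j).fun_mul (hcomp1 _ _ ((hg₂ 0 (Pi.single j 1) z₁ hz₁b).sub (hg₂ 0 0 z₁ hz₁b)))
    · refine DifferentiableAt.fun_add ?_ (hconj _ ?_)
      · rw [hgh₃]
        refine DifferentiableAt.fun_add (hcomp1 _ _ (hg₃ 0 0 z₁ hz₁b)) ?_
        refine DifferentiableAt.fun_sum (fun j _ => ?_)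
        exact (hcoordB j).fun_mul (hcomp1 _ _ ((hg₃ 0 (Pi.single j 1) z₁ hz₁b).sub (hg₃ 0 0 z₁ hz₁b)))
      · rw [hgh₄]
        refine DifferentiableAt.fun_add (hcomp1 _ _ (hg₄ 0 0 z₁ hz₁b)) ?_
        refine DifferentiableAt.fun_sum (fun i _ => ?_)
        exact (hcoordA i).fun_mul (hcomp1 _ _ ((hg₄ (Pi.single i 1) 0 z₁ hz₁b).sub (hg₄ 0 0 z₁ hz₁b)))
    · refine DifferentiableAt.fun_add ?_ (hconj _ ?_)
      · rw [hgh₁]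
        refine DifferentiableAt.fun_add (hcomp2 _ _ (hg₁ 0 0 z₂ hz₂b)) ?_
        refine DifferentiableAt.fun_sum (fun i _ => ?_)
        exact (hcoordA i).fun_mul (hcomp2 _ _ ((hg₁ (Pi.single i 1) 0 z₂ hz₂b).sub (hg₁ 0 0 z₂ hz₂b)))
      · rw [hgh₂]
        refine DifferentiableAt.fun_add (hcomp2 _ _ (hg₂ 0 0 z₂ hz₂b)) ?_
        refine DifferentiableAt.fun_sum (fun j _ => ?_)
        exact (hcoordB j).fun_mul (hcomp2 _ _ ((hg₂ 0 (Pi.single j 1) z₂ hz₂b).sub (hg₂ 0 0 z₂ hz₂b)))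
    · refine DifferentiableAt.fun_add ?_ (hconj _ ?_)
      · rw [hgh₃]
        refine DifferentiableAt.fun_add (hcomp2 _ _ (hg₃ 0 0 z₂ hz₂b)) ?_
        refine DifferentiableAt.fun_sum (fun j _ => ?_)
        exact (hcoordB j).fun_mul (hcomp2 _ _ ((hg₃ 0 (Pi.single j 1) z₂ hz₂b).sub (hg₃ 0 0 z₂ hz₂b)))
      · rw [hgh₄]
        refine DifferentiableAt.fun_add (hcomp2 _ _ (hg₄ 0 0 z₂ hz₂b)) ?_
        refine DifferentiableAt.fun_sum (fun i _ => ?_)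
        exact (hcoordA i).fun_mul (hcomp2 _ _ ((hg₄ (Pi.single i 1) 0 z₂ hz₂b).sub (hg₄ 0 0 z₂ hz₂b)))
  have hfd : fderiv ℝ Φ pt = fderiv ℝ Φh pt := hev.fderiv_eq
  -- final span argument
  rw [eq_top_iff]
  rintro ⟨w₁, w₂⟩ -
  obtain ⟨δ, ε, hx, hy⟩ := mySolve (u z₁ - u z₂) (vA z₁ - vA z₂) (pB z₁ - pB z₂) (q z₁ - q z₂)
    (w₁.1 - w₂.1) (w₁.2 - w₂.2) hdet
  set ξ : ((Fin (n₁ + 1) → ℂ) × (Fin (n₃ + 1) → ℂ)) × ℂ × ℂ :=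
    ((Pi.single 0 δ, Pi.single 0 ε), 0, 0) with hξdef
  set V : (ℂ × ℂ) × (ℂ × ℂ) :=
    ((δ * u z₁ + conj (ε * pB z₁), ε * q z₁ + conj (δ * vA z₁)),
     (δ * u z₂ + conj (ε * pB z₂), ε * q z₂ + conj (δ * vA z₂))) with hVdef
  have haff : ∀ t : ℝ, Φh (pt + t • ξ) = Φh pt + t • V := by
    intro t
    have e₁ : ∀ z : ℂ, gh₁ (A + t • (Pi.single 0 δ : Fin (n₁ + 1) → ℂ)) z
        = gh₁ A z + ((t : ℂ) * δ) * u z := by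
      intro z
      rw [hgh₁]
      exact hat_shift (g₁ 0 0) (fun i z => g₁ (Pi.single i 1) 0 z - g₁ 0 0 z) A δ t z
    have e₂ : ∀ z : ℂ, gh₂ (B + t • (Pi.single 0 ε : Fin (n₃ + 1) → ℂ)) z
        = gh₂ B z + ((t : ℂ) * ε) * pB z := by
      intro z
      rw [hgh₂]
      exact hat_shift (g₂ 0 0) (fun j z => g₂ 0 (Pi.single j 1) z - g₂ 0 0 z) B ε t z
    have e₃ : ∀ z : ℂ, gh₃ (B + t • (Pi.single 0 ε : Fin (n₃ + 1) → ℂ)) z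
        = gh₃ B z + ((t : ℂ) * ε) * q z := by
      intro z
      rw [hgh₃]
      exact hat_shift (g₃ 0 0) (fun j z => g₃ 0 (Pi.single j 1) z - g₃ 0 0 z) B ε t z
    have e₄ : ∀ z : ℂ, gh₄ (A + t • (Pi.single 0 δ : Fin (n₁ + 1) → ℂ)) z
        = gh₄ A z + ((t : ℂ) * δ) * vA z := by
      intro z
      rw [hgh₄]
      exact hat_shift (g₄ 0 0) (fun i z => g₄ (Pi.single i 1) 0 z - g₄ 0 0 z) A δ t z
    have hpt : pt + t • ξ =
        ((A + t • (Pi.single 0 δ : Fin (n₁ + 1) → ℂ),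
          B + t • (Pi.single 0 ε : Fin (n₃ + 1) → ℂ)), z₁, z₂) := by
      rw [hptdef, hξdef]
      simp [Prod.ext_iff]
    rw [hpt, hΦhdef, hVdef]
    simp only [Prod.smul_mk, Prod.mk_add_mk, Prod.mk.injEq]
    rw [e₁ z₁, e₁ z₂, e₂ z₁, e₂ z₂, e₃ z₁, e₃ z₂, e₄ z₁, e₄ z₂]
    refine ⟨⟨?_, ?_⟩, ?_, ?_⟩ <;>
      · simp only [Complex.real_smul, map_add, map_mul, conj_ofReal]
        ring
  have hlin : HasDerivAt (fun t : ℝ => pt + t • ξ) ξ 0 := by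
    have h := ((hasDerivAt_id (0:ℝ)).smul_const ξ).const_add pt
    simpa using h
  have hlin0 : pt + (0:ℝ) • ξ = pt := by simp
  have hdline : HasDerivAt (fun t : ℝ => Φh (pt + t • ξ)) (fderiv ℝ Φh pt ξ) 0 := by
    have hF : HasFDerivAt Φh (fderiv ℝ Φh pt) (pt + (0:ℝ) • ξ) := by
      rw [hlin0]; exact hdiffΦh.hasFDerivAt
    exact hF.comp_hasDerivAt 0 hlin
  have hvline : HasDerivAt (fun t : ℝ => Φh pt + t • V) V 0 := by
    have h := ((hasDerivAt_id (0:ℝ)).smul_const V).const_add (Φh pt)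
    simpa using h
  have hLV : fderiv ℝ Φh pt ξ = V := by
    have heqfun : (fun t : ℝ => Φh (pt + t • ξ)) = fun t : ℝ => Φh pt + t • V :=
      funext haff
    rw [heqfun] at hdline
    exact hdline.unique hvline
  have hVmem : V ∈ Submodule.span ℝ
      (Set.range (fderiv ℝ Φ ((A, B), z₁, z₂)) ∪ {p : (ℂ × ℂ) × (ℂ × ℂ) | p.1 = p.2}) := by
    refine Submodule.subset_span (Or.inl ⟨ξ, ?_⟩)
    rw [show (((A, B), z₁, z₂) : ((Fin (n₁ + 1) → ℂ) × (Fin (n₃ + 1) → ℂ)) × ℂ × ℂ) = pt from hptdef.symm, hfd, hLV]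
  have hdiag : ((w₁, w₂) - V) ∈ {p : (ℂ × ℂ) × (ℂ × ℂ) | p.1 = p.2} := by
    show w₁ - V.1 = w₂ - V.2
    rw [hVdef]
    have hx' := hx
    have hy' := hy
    simp only [map_sub, map_mul] at hx' hy'
    refine Prod.ext ?_ ?_
    · show w₁.1 - (δ * u z₁ + conj (ε * pB z₁)) = w₂.1 - (δ * u z₂ + conj (ε * pB z₂))
      simp only [map_mul]
      linear_combination -hx'
    · show w₁.2 - (ε * q z₁ + conj (δ * vA z₁)) = w₂.2 - (ε * q z₂ + conj (δ * vA z₂))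
      simp only [map_mul]
      linear_combination -hy'
  have hsum2 : ((w₁, w₂) - V) + V ∈ Submodule.span ℝ
      (Set.range (fderiv ℝ Φ ((A, B), z₁, z₂)) ∪ {p : (ℂ × ℂ) × (ℂ × ℂ) | p.1 = p.2}) :=
    Submodule.add_mem _ (Submodule.subset_span (Or.inr hdiag)) hVmem
  simpa using hsum2
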